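/- For all t > 0, W'(t) = L_K(t) - b ∫_0^t L_K(t-s) W'(s) ds, where L_K(t) = t^{α-1}/(c Γ(α)); equivalently, bW' is the resolvent of bL_K, i.e. bW' = bL_K - (bL_K)*(bW') on (0,∞). -/

import Mathlib

open MeasureTheory

lemma gamma_growth {α y : ℝ} (hα : 0 < α) (hα1 : α < 1) (hy : 1 ≤ y) :
    y ^ α * Real.Gamma y ≤ 2 * Real.Gamma (y + α) := by
  have hy0 : (0:ℝ) < y := by linarith
  have hyα : (0:ℝ) < y + α := by linarith
  have hΓy : 0 < Real.Gamma y := Real.Gamma_pos_of_pos hy0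
  have hΓyα : 0 < Real.Gamma (y + α) := Real.Gamma_pos_of_pos hyα
  -- log-convexity: log Γ(y+1) ≤ α log Γ(y+α) + (1-α) log Γ(y+1+α)
  have key := Real.convexOn_log_Gamma.2 (Set.mem_Ioi.2 hyα)
    (Set.mem_Ioi.2 (by linarith : (0:ℝ) < y + 1 + α)) hα.le
    (by linarith : (0:ℝ) ≤ 1 - α) (by ring)
  have hcombo : α • (y + α) + (1 - α) • (y + 1 + α) = y + 1 := by
    simp only [smul_eq_mul]; ring
  rw [hcombo] at key
  simp only [Function.comp_apply, smul_eq_mul] at key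
  have hΓ1 : Real.Gamma (y + 1) = y * Real.Gamma y := Real.Gamma_add_one hy0.ne'
  have hΓ2 : Real.Gamma (y + 1 + α) = (y + α) * Real.Gamma (y + α) := by
    rw [show y + 1 + α = (y + α) + 1 by ring, Real.Gamma_add_one hyα.ne']
  rw [hΓ1, hΓ2, Real.log_mul hy0.ne' hΓy.ne', Real.log_mul hyα.ne' hΓyα.ne'] at key
  -- exponentiate: y * Γ y ≤ Γ(y+α) * (y+α)^(1-α)
  have key2 : y * Real.Gamma y ≤ Real.Gamma (y + α) * (y + α) ^ (1 - α) := by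
    have := Real.exp_le_exp.2 key
    rw [Real.exp_add, Real.exp_log hy0, Real.exp_log hΓy] at this
    calc y * Real.Gamma y = Real.exp (Real.log y + Real.log (Real.Gamma y)) := by
          rw [Real.exp_add, Real.exp_log hy0, Real.exp_log hΓy]
      _ ≤ Real.exp (α * Real.log (Real.Gamma (y + α)) +
            (1 - α) * (Real.log (y + α) + Real.log (Real.Gamma (y + α)))) := Real.exp_le_exp.2 key
      _ = Real.Gamma (y + α) * (y + α) ^ (1 - α) := by
          rw [show α * Real.log (Real.Gamma (y + α)) +
            (1 - α) * (Real.log (y + α) + Real.log (Real.Gamma (y + α))) =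
            Real.log (Real.Gamma (y + α)) + Real.log (y + α) * (1 - α) by ring,
            Real.exp_add, Real.exp_log hΓyα, ← Real.rpow_def_of_pos hyα]
  -- (y+α)^(1-α) ≤ 2 * y^(1-α)
  have key3 : (y + α) ^ (1 - α) ≤ 2 * y ^ (1 - α) := by
    calc (y + α) ^ (1 - α) ≤ (2 * y) ^ (1 - α) :=
          Real.rpow_le_rpow hyα.le (by linarith) (by linarith)
      _ = 2 ^ (1 - α) * y ^ (1 - α) := Real.mul_rpow (by norm_num) hy0.le
      _ ≤ 2 * y ^ (1 - α) := by
          have h2 : (2:ℝ) ^ (1 - α) ≤ 2 ^ (1:ℝ) :=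
            Real.rpow_le_rpow_of_exponent_le one_le_two (by linarith)
          rw [Real.rpow_one] at h2
          exact mul_le_mul_of_nonneg_right h2 (Real.rpow_nonneg hy0.le _)
  have hsplit : y ^ α * y ^ (1 - α) = y := by
    rw [← Real.rpow_add hy0]; norm_num
  have hpow : (0:ℝ) < y ^ (1 - α) := Real.rpow_pos_of_pos hy0 _
  rw [← mul_le_mul_iff_of_pos_right hpow]
  calc y ^ α * Real.Gamma y * y ^ (1 - α) = y * Real.Gamma y := by
        rw [mul_comm (y ^ α) (Real.Gamma y), mul_assoc, hsplit]; ring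
    _ ≤ Real.Gamma (y + α) * (y + α) ^ (1 - α) := key2
    _ ≤ Real.Gamma (y + α) * (2 * y ^ (1 - α)) := mul_le_mul_of_nonneg_left key3 hΓyα.le
    _ = 2 * Real.Gamma (y + α) * y ^ (1 - α) := by ring

lemma summable_mlf {α β : ℝ} (hα : 0 < α) (hα1 : α < 1) (hβ : 0 < β) (x : ℝ) :
    Summable (fun n : ℕ => x ^ n / Real.Gamma (α * n + β)) := by
  set M : ℝ := max 1 ((4 * |x| + 1) ^ α⁻¹) with hM
  obtain ⟨N, hN⟩ := exists_nat_ge (M / α)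
  apply summable_of_ratio_norm_eventually_le (r := 1/2) (by norm_num)
  filter_upwards [Filter.eventually_ge_atTop N] with n hn
  set y : ℝ := α * n + β with hy
  have hyM : M ≤ y := by
    have h1 : M ≤ α * N := by
      rw [← div_le_iff₀' hα]; exact hN
    have h2 : (N:ℝ) ≤ n := Nat.cast_le.2 hn
    nlinarith
  have hy1 : 1 ≤ y := le_trans (le_max_left _ _) hyM
  have hy0 : (0:ℝ) < y := by linarith
  have hΓy : 0 < Real.Gamma y := Real.Gamma_pos_of_pos hy0
  have hΓyα : 0 < Real.Gamma (y + α) := Real.Gamma_pos_of_pos (by linarith)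
  have hyx : 4 * |x| + 1 ≤ y ^ α := by
    calc 4 * |x| + 1 = ((4 * |x| + 1) ^ α⁻¹) ^ α := by
          rw [Real.rpow_inv_rpow (by positivity) hα.ne']
      _ ≤ y ^ α := Real.rpow_le_rpow (Real.rpow_nonneg (by positivity) _)
          (le_trans (le_max_right _ _) hyM) hα.le
  -- key : 2 * |x| * Real.Gamma y ≤ Real.Gamma (y + α)
  have key : 4 * |x| * Real.Gamma y ≤ 2 * Real.Gamma (y + α) := by
    calc 4 * |x| * Real.Gamma y ≤ y ^ α * Real.Gamma y := by nlinarith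
      _ ≤ 2 * Real.Gamma (y + α) := gamma_growth hα hα1 hy1
  have harg : α * (n + 1 : ℕ) + β = y + α := by
    push_cast; ring
  rw [harg]
  rw [norm_div, norm_div, norm_pow, norm_pow, Real.norm_eq_abs, Real.norm_eq_abs,
    Real.norm_eq_abs, abs_of_pos hΓy, abs_of_pos hΓyα, mul_div_assoc']
  rw [div_le_div_iff₀ hΓyα hΓy, pow_succ]
  nlinarith [pow_nonneg (abs_nonneg x) n, hΓyα, hΓy, abs_nonneg x,
    mul_le_mul_of_nonneg_left key (pow_nonneg (abs_nonneg x) n)]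

lemma realBeta {u v t : ℝ} (hu : 0 < u) (hv : 0 < v) (ht : 0 < t) :
    ∫ s in (0:ℝ)..t, s ^ (u - 1) * (t - s) ^ (v - 1) =
      t ^ (u + v - 1) * (Real.Gamma u * Real.Gamma v / Real.Gamma (u + v)) := by
  have hΓuv : (0:ℝ) < Real.Gamma (u + v) := Real.Gamma_pos_of_pos (by linarith)
  have h1 := Complex.Gamma_mul_Gamma_eq_betaIntegral (s := (u:ℂ)) (t := (v:ℂ))
    (by simpa using hu) (by simpa using hv)
  have h2 := Complex.betaIntegral_scaled (u:ℂ) (v:ℂ) ht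
  have h3 : (∫ x in (0:ℝ)..t, (x : ℂ) ^ ((u:ℂ) - 1) * ((t:ℂ) - x) ^ ((v:ℂ) - 1)) =
      ((∫ s in (0:ℝ)..t, s ^ (u - 1) * (t - s) ^ (v - 1) : ℝ) : ℂ) := by
    rw [← intervalIntegral.integral_ofReal]
    refine intervalIntegral.integral_congr fun x hx => ?_
    rw [Set.uIcc_of_le ht.le] at hx
    rw [Complex.ofReal_mul, Complex.ofReal_cpow hx.1,
      Complex.ofReal_cpow (by linarith [hx.2] : (0:ℝ) ≤ t - x)]
    push_cast
    ring
  rw [h3] at h2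
  -- h2 : ofReal I = (t:ℂ)^(u+v-1) * betaIntegral u v
  -- h1 : Γu * Γv = Γ(u+v) * betaIntegral u v
  have hbeta : Complex.betaIntegral u v =
      ((Real.Gamma u * Real.Gamma v / Real.Gamma (u + v) : ℝ) : ℂ) := by
    have hΓ : (Real.Gamma (u+v) : ℂ) ≠ 0 := by
      exact_mod_cast hΓuv.ne'
    have h1' : ((Real.Gamma u : ℂ)) * (Real.Gamma v : ℂ) =
        ((Real.Gamma (u+v) : ℂ)) * Complex.betaIntegral u v := by
      rw [← Complex.Gamma_ofReal, ← Complex.Gamma_ofReal, ← Complex.Gamma_ofReal] at *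
      push_cast
      exact h1
    field_simp at h1' ⊢
    push_cast
    rw [h1', mul_div_cancel_left₀ _ hΓ]
  rw [hbeta] at h2
  have hpow : ((t:ℂ)) ^ ((u:ℂ) + v - 1) = ((t ^ (u + v - 1) : ℝ) : ℂ) := by
    rw [show ((u:ℂ) + v - 1) = ((u + v - 1 : ℝ) : ℂ) by push_cast; ring,
      ← Complex.ofReal_cpow ht.le]
  rw [hpow, ← Complex.ofReal_mul] at h2
  exact_mod_cast h2

lemma betaIntegrable {u v t : ℝ} (hu : 0 < u) (hv : 0 < v) (ht : 0 < t) :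
    IntervalIntegrable (fun s => s ^ (u - 1) * (t - s) ^ (v - 1)) volume 0 t := by
  have half : ∀ {u v : ℝ}, 0 < u → 0 < v →
      IntervalIntegrable (fun s => s ^ (u - 1) * (t - s) ^ (v - 1)) volume 0 (t/2) := by
    intro u v hu hv
    apply IntervalIntegrable.mul_continuousOn (intervalIntegral.intervalIntegrable_rpow' (by linarith))
    apply ContinuousOn.rpow_const (by fun_prop)
    intro x hx
    rw [Set.uIcc_of_le (by linarith : (0:ℝ) ≤ t/2)] at hx
    left
    have := hx.2
    intro h
    have : t - x = 0 → False := by intro h0; linarith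
    exact this h
  have h1 := half hu hv
  have h2 := ((half hv hu).comp_sub_left t).symm
  rw [show t - 0 = t by ring, show t - t/2 = t/2 by ring] at h2
  simp only [sub_sub_cancel] at h2
  have hfun : (fun x : ℝ => (t - x) ^ (v - 1) * x ^ (u - 1)) =
      fun s : ℝ => s ^ (u - 1) * (t - s) ^ (v - 1) := by
    funext x; ring
  rw [hfun] at h2
  exact h1.trans h2

/-- Mittag-Leffler function `E_{α,α}(x) = Σ_{n=0}^∞ xⁿ / Γ(α(n+1))`. -/
noncomputable def mlf (α x : ℝ) : ℝ := ∑' n : ℕ, x ^ n / Real.Gamma (α * (n + 1))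

/-- Derivative of the scale function: `W'(x) = c⁻¹ x^{α-1} E_{α,α}(-(b/c) x^α)`. -/
noncomputable def Wd (α c b : ℝ) (x : ℝ) : ℝ := c⁻¹ * x ^ (α - 1) * mlf α (-(b / c) * x ^ α)

/-- `L_K(t) = t^{α-1}/(c Γ(α))`. -/
noncomputable def LK (α c : ℝ) (t : ℝ) : ℝ := t ^ (α - 1) / (c * Real.Gamma α)

theorem Wd_resolvent_of_LK (α c b : ℝ) (hα : 0 < α) (hα1 : α < 1) (hc : 0 < c) (hb : 0 ≤ b) :
    ∀ t > (0:ℝ),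
      Wd α c b t = LK α c t - b * ∫ s in (0:ℝ)..t, LK α c (t - s) * Wd α c b s := by
  intro t ht
  have hΓα : 0 < Real.Gamma α := Real.Gamma_pos_of_pos hα
  have hq0 : 0 ≤ b / c := div_nonneg hb hc.le
  have hΓn : ∀ n : ℕ, 0 < Real.Gamma (α * (n + 1)) :=
    fun n => Real.Gamma_pos_of_pos (by positivity)
  have hΓn2 : ∀ n : ℕ, 0 < Real.Gamma (α * (n + 1) + α) :=
    fun n => Real.Gamma_pos_of_pos (by positivity)
  -- series representation of Wd
  have hWd : ∀ s : ℝ, 0 < s → Wd α c b s =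
      ∑' n : ℕ, c⁻¹ * (-(b / c)) ^ n * s ^ (α * (n + 1) - 1) / Real.Gamma (α * (n + 1)) := by
    intro s hs
    rw [Wd, mlf, ← tsum_mul_left]
    refine tsum_congr fun n => ?_
    have h1 : (-(b / c) * s ^ α) ^ n = (-(b / c)) ^ n * s ^ (α * n) := by
      rw [mul_pow, ← Real.rpow_natCast (s ^ α) n, ← Real.rpow_mul hs.le]
    have h2 : s ^ (α - 1) * s ^ (α * n) = s ^ (α * (n + 1) - 1) := by
      rw [← Real.rpow_add hs]; congr 1; push_cast; ring
    rw [h1, show c⁻¹ * s ^ (α - 1) * ((-(b / c)) ^ n * s ^ (α * (n:ℝ)) /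
        Real.Gamma (α * ((n:ℝ) + 1))) =
      c⁻¹ * (-(b / c)) ^ n * (s ^ (α - 1) * s ^ (α * (n:ℝ))) /
        Real.Gamma (α * ((n:ℝ) + 1)) from by ring, h2]
  -- summability of the series for Wd t
  have hgs : Summable (fun n : ℕ =>
      c⁻¹ * (-(b / c)) ^ n * t ^ (α * (n + 1) - 1) / Real.Gamma (α * (n + 1))) := by
    have h := (summable_mlf hα hα1 hα (-(b / c) * t ^ α)).mul_left (c⁻¹ * t ^ (α - 1))
    refine h.congr fun n => ?_
    have h1 : (-(b / c) * t ^ α) ^ n = (-(b / c)) ^ n * t ^ (α * n) := by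
      rw [mul_pow, ← Real.rpow_natCast (t ^ α) n, ← Real.rpow_mul ht.le]
    have h2 : t ^ (α - 1) * t ^ (α * n) = t ^ (α * (n + 1) - 1) := by
      rw [← Real.rpow_add ht]; congr 1; push_cast; ring
    rw [show α * (n:ℝ) + α = α * ((n:ℝ) + 1) from by ring, h1,
      show c⁻¹ * t ^ (α - 1) * ((-(b / c)) ^ n * t ^ (α * (n:ℝ)) /
          Real.Gamma (α * ((n:ℝ) + 1))) =
        c⁻¹ * (-(b / c)) ^ n * (t ^ (α - 1) * t ^ (α * (n:ℝ))) /
          Real.Gamma (α * ((n:ℝ) + 1)) from by ring, h2]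
  -- the terms of the expanded integrand
  set C : ℕ → ℝ := fun n => c⁻¹ * (-(b / c)) ^ n / (c * Real.Gamma α * Real.Gamma (α * (n + 1)))
    with hC
  set Bv : ℕ → ℝ := fun n => t ^ (α * (n + 1) + α - 1) *
    (Real.Gamma (α * (n + 1)) * Real.Gamma α / Real.Gamma (α * (n + 1) + α)) with hBv
  have hupos : ∀ n : ℕ, (0:ℝ) < α * (n + 1) := fun n => by positivity
  have hbetaInt : ∀ n : ℕ, IntervalIntegrable
      (fun s => s ^ (α * (n + 1) - 1) * (t - s) ^ (α - 1)) MeasureTheory.volume 0 t :=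
    fun n => betaIntegrable (hupos n) hα ht
  have hbetaVal : ∀ n : ℕ, ∫ s in Set.Ioc (0:ℝ) t, s ^ (α * (n + 1) - 1) * (t - s) ^ (α - 1) =
      Bv n := by
    intro n
    rw [← intervalIntegral.integral_of_le ht.le, realBeta (hupos n) hα ht, hBv]
  have hInt : ∀ n : ℕ, MeasureTheory.IntegrableOn
      (fun s => C n * (s ^ (α * (n + 1) - 1) * (t - s) ^ (α - 1))) (Set.Ioc (0:ℝ) t) := by
    intro n
    exact ((intervalIntegrable_iff_integrableOn_Ioc_of_le ht.le).1 (hbetaInt n)).const_mul _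
  have hval : ∀ n : ℕ, ∫ s in Set.Ioc (0:ℝ) t,
      C n * (s ^ (α * (n + 1) - 1) * (t - s) ^ (α - 1)) = C n * Bv n := by
    intro n
    rw [MeasureTheory.integral_const_mul _ _, hbetaVal n]
  have hnorm : ∀ n : ℕ, ∫ s in Set.Ioc (0:ℝ) t,
      ‖C n * (s ^ (α * (n + 1) - 1) * (t - s) ^ (α - 1))‖ = |C n| * Bv n := by
    intro n
    rw [setIntegral_congr_fun measurableSet_Ioc
      (g := fun s => |C n| * (s ^ (α * (n + 1) - 1) * (t - s) ^ (α - 1)))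
      (fun s hs => by
        rw [Real.norm_eq_abs, abs_mul, abs_of_nonneg
          (mul_nonneg (Real.rpow_nonneg hs.1.le _) (Real.rpow_nonneg (by linarith [hs.2]) _))]),
      MeasureTheory.integral_const_mul _ _, hbetaVal n]
  have hCabs : ∀ n : ℕ, |C n| = c⁻¹ * (b / c) ^ n / (c * Real.Gamma α * Real.Gamma (α * (n + 1))) := by
    intro n
    rw [hC, abs_div, abs_mul, abs_pow, abs_neg, abs_of_nonneg hq0,
      abs_of_pos (show (0:ℝ) < c⁻¹ by positivity),
      abs_of_pos (show (0:ℝ) < c * Real.Gamma α * Real.Gamma (α * (n + 1)) by positivity)]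
  have hsumnorm : Summable (fun n : ℕ => ∫ s in Set.Ioc (0:ℝ) t,
      ‖C n * (s ^ (α * (n + 1) - 1) * (t - s) ^ (α - 1))‖) := by
    have h := (summable_mlf hα hα1 (show (0:ℝ) < 2 * α by linarith) (b / c * t ^ α)).mul_left
      (c⁻¹ * c⁻¹ * t ^ (2 * α - 1))
    refine h.congr fun n => ?_
    rw [hnorm n, hCabs n]
    simp only [hBv]
    have h1 : (b / c * t ^ α) ^ n = (b / c) ^ n * t ^ (α * n) := by
      rw [mul_pow, ← Real.rpow_natCast (t ^ α) n, ← Real.rpow_mul ht.le]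
    have h2 : t ^ (α * ((n:ℝ) + 1) + α - 1) = t ^ (α * n) * t ^ (2 * α - 1) := by
      rw [← Real.rpow_add ht]; congr 1; push_cast; ring
    rw [h1, h2, show α * (n:ℝ) + 2 * α = α * ((n:ℝ) + 1) + α from by ring]
    have e1 := (hΓn n).ne'
    have e2 := (hΓn2 n).ne'
    field_simp
  -- the integrand equals the series, pointwise on (0, t]
  have hFeq : ∀ s ∈ Set.Ioc (0:ℝ) t, LK α c (t - s) * Wd α c b s =
      ∑' n : ℕ, C n * (s ^ (α * (n + 1) - 1) * (t - s) ^ (α - 1)) := by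
    intro s hs
    rw [hWd s hs.1, ← tsum_mul_left]
    refine tsum_congr fun n => ?_
    rw [LK, hC]
    ring
  -- swap integral and sum
  have hswap : (∫ s in (0:ℝ)..t, LK α c (t - s) * Wd α c b s) = ∑' n : ℕ, C n * Bv n := by
    rw [intervalIntegral.integral_of_le ht.le,
      setIntegral_congr_fun measurableSet_Ioc hFeq,
      ← integral_tsum_of_summable_integral_norm hInt hsumnorm]
    exact tsum_congr hval
  -- assemble
  rw [hWd t ht, hswap, Summable.tsum_eq_zero_add hgs]
  have h0 : c⁻¹ * (-(b / c)) ^ (0:ℕ) * t ^ (α * ((0:ℕ) + 1) - 1) /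
      Real.Gamma (α * ((0:ℕ) + 1)) = LK α c t := by
    rw [LK]
    push_cast
    rw [pow_zero, mul_one, zero_add, mul_one]
    field_simp
  have hterm : ∀ n : ℕ, b * (C n * Bv n) =
      -(c⁻¹ * (-(b / c)) ^ (n + 1) * t ^ (α * ((n:ℝ) + 1 + 1) - 1) /
        Real.Gamma (α * ((n:ℝ) + 1 + 1))) := by
    intro n
    simp only [hC, hBv]
    rw [pow_succ,
      show α * ((n:ℝ) + 1 + 1) = α * ((n:ℝ) + 1) + α from by ring,
      show α * ((n:ℝ) + 1) + α - 1 = α * ((n:ℝ) + 1) + α - 1 from rfl]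
    have e1 := (hΓn n).ne'
    have e2 := (hΓn2 n).ne'
    field_simp
  have hsum2 : b * ∑' n : ℕ, C n * Bv n =
      -∑' n : ℕ, c⁻¹ * (-(b / c)) ^ (n + 1) * t ^ (α * ((n:ℝ) + 1 + 1) - 1) /
        Real.Gamma (α * ((n:ℝ) + 1 + 1)) := by
    rw [← tsum_mul_left, ← tsum_neg]
    exact tsum_congr hterm
  rw [hsum2, ← h0]
  push_cast
  rw [sub_neg_eq_add]
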